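/- Let F be a field, n ≥ 1, and B an n × n matrix over F. Then B generates a skeleton chain of finite length: there exist p ≥ 0, dimensions n₀ = n, n₁, …, n_p with n₀ > n₁ > ⋯ > n_p whenever p ≥ 1, and matrices A_{2i} of size n_i × n_{i−1} and A_{2i−1} of size n_{i−1} × n_i (i = 1,…,p) such that B = A₁ · A₂, A_{2i} · A_{2i−1} = A_{2i+1} · A_{2i+2} for i = 1,…,p−1, and the final chain member B^p := A_{2p} · A_{2p−1} (an n_p × n_p matrix, equal to B itself when p = 0) is either invertible or zero. -/

import Mathlib

open Matrix

lemma factor_lemma {F : Type*} [Field F] [DecidableEq F] (m : ℕ)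
    (M : Matrix (Fin m) (Fin m) F) (h : ¬ IsUnit M) :
    ∃ r < m, ∃ (C : Matrix (Fin m) (Fin r) F) (R : Matrix (Fin r) (Fin m) F),
      M = C * R := by
  classical
  set f := Matrix.toLin' M with hf
  set W := LinearMap.range f with hW
  have hfd : FiniteDimensional F W := inferInstance
  have hrle : Module.finrank F W ≤ m := by
    have := Submodule.finrank_le W
    simpa using this
  have hrne : W ≠ ⊤ := by
    intro htop
    apply h
    rw [← Matrix.mulVec_surjective_iff_isUnit]
    have hsurj : Function.Surjective f := LinearMap.range_eq_top.mp htop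
    have : ⇑f = M.mulVec := by
      rw [hf, Matrix.toLin'_apply', Matrix.coe_mulVecLin]
    rwa [this] at hsurj
  have hrlt : Module.finrank F W < m := by
    rcases lt_or_eq_of_le hrle with h' | h'
    · exact h'
    · exfalso; apply hrne
      apply Submodule.eq_top_of_finrank_eq
      simpa using h'
  refine ⟨Module.finrank F W, hrlt, ?_⟩
  set b : Module.Basis (Fin (Module.finrank F W)) F W := Module.finBasis F W
  refine ⟨LinearMap.toMatrix b (Pi.basisFun F (Fin m)) W.subtype,
    LinearMap.toMatrix (Pi.basisFun F (Fin m)) b (f.rangeRestrict), ?_⟩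
  have hcomp : W.subtype.comp f.rangeRestrict = f :=
    LinearMap.subtype_comp_codRestrict _ _ _
  have key := LinearMap.toMatrix_comp (Pi.basisFun F (Fin m)) b
    (Pi.basisFun F (Fin m)) W.subtype f.rangeRestrict
  rw [hcomp] at key
  rw [← key, LinearMap.toMatrix_eq_toMatrix', hf, LinearMap.toMatrix'_toLin']

lemma chain_aux {F : Type*} [Field F] [DecidableEq F] :
    ∀ (m : ℕ) (M : Matrix (Fin m) (Fin m) F),
    ∃ (p : ℕ) (d : ℕ → ℕ) (h0 : d 0 = m)
      (Af : ∀ i : ℕ, Matrix (Fin (d (i + 1))) (Fin (d i)) F)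
      (Ab : ∀ i : ℕ, Matrix (Fin (d i)) (Fin (d (i + 1))) F),
      (∀ i < p, d (i + 1) < d i) ∧
      (1 ≤ p → M.submatrix (Fin.cast h0) (Fin.cast h0) = Ab 0 * Af 0) ∧
      (∀ i : ℕ, i + 1 < p → Af i * Ab i = Ab (i + 1) * Af (i + 1)) ∧
      (∀ q : ℕ, p = q + 1 → (IsUnit (Af q * Ab q) ∨ Af q * Ab q = 0)) ∧
      (p = 0 → (IsUnit M ∨ M = 0)) := by
  intro m
  induction m using Nat.strong_induction_on with
  | _ m IH =>
  intro M
  by_cases hbase : IsUnit M ∨ M = 0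
  · exact ⟨0, fun _ => m, rfl, fun _ => 0, fun _ => 0,
      fun i hi => absurd hi (Nat.not_lt_zero i),
      fun h => absurd h (by norm_num),
      fun i hi => absurd hi (Nat.not_lt_zero _),
      fun q hq => absurd hq (by omega),
      fun _ => hbase⟩
  push_neg at hbase
  obtain ⟨hnu, _⟩ := hbase
  obtain ⟨r, hr, C, R, hM⟩ := factor_lemma m M hnu
  obtain ⟨p', d', h0', Af', Ab', hdec', hfac', hperm', hfin', hzero'⟩ := IH r hr (R * C)
  refine ⟨p' + 1,
    fun i => Nat.casesOn i m d', rfl,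
    fun i => Nat.casesOn i (R.submatrix (Fin.cast h0') id) Af',
    fun i => Nat.casesOn i (C.submatrix id (Fin.cast h0')) Ab',
    ?_, ?_, ?_, ?_, ?_⟩
  · intro i hi
    cases i with
    | zero => simpa [h0'] using hr
    | succ j => exact hdec' j (by omega)
  · intro _
    have : (Fin.cast (rfl : m = m)) = (id : Fin m → Fin m) := rfl
    show M.submatrix _ _ = C.submatrix id (Fin.cast h0') * R.submatrix (Fin.cast h0') id
    have he : (Fin.cast h0' : Fin (d' 0) → Fin r) = ⇑(finCongr h0') := rfl
    rw [this, Matrix.submatrix_id_id, hM, he, Matrix.submatrix_mul_equiv,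
      Matrix.submatrix_id_id]
  · intro i hi
    cases i with
    | zero =>
      show R.submatrix (Fin.cast h0') id * C.submatrix id (Fin.cast h0')
        = Ab' 0 * Af' 0
      rw [← hfac' (by omega)]
      have he : (Fin.cast h0' : Fin (d' 0) → Fin r) = ⇑(finCongr h0') := rfl
      have := Matrix.submatrix_mul_equiv R C (Fin.cast h0') (Equiv.refl (Fin m))
        (Fin.cast h0')
      simpa using this
    | succ j => exact hperm' j (by omega)
  · intro q hq
    have hq' : q = p' := by omega
    subst hq'
    cases q with
    | zero =>
      show IsUnit (R.submatrix (Fin.cast h0') id * C.submatrix id (Fin.cast h0')) ∨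
        R.submatrix (Fin.cast h0') id * C.submatrix id (Fin.cast h0') = 0
      have hRC := hzero' rfl
      have heq : R.submatrix (Fin.cast h0') id * C.submatrix id (Fin.cast h0')
          = (R * C).submatrix (Fin.cast h0') (Fin.cast h0') := by
        have := Matrix.submatrix_mul_equiv R C (Fin.cast h0') (Equiv.refl (Fin m))
          (Fin.cast h0')
        simpa using this
      have hre : (R * C).submatrix (Fin.cast h0') (Fin.cast h0')
          = Matrix.reindexAlgEquiv F F (finCongr h0').symm (R * C) := rfl
      rw [heq, hre]
      rcases hRC with hu | hz
      · exact Or.inl (hu.map (Matrix.reindexAlgEquiv F F (finCongr h0').symm))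
      · right; rw [hz]; exact map_zero _
    | succ q' => exact hfin' q' rfl
  · intro h; omega

/-- every square matrix `B` over a field generates a skeleton
chain of finite length: there are `p ≥ 0`, strictly decreasing dimensions
`d 0 = n > d 1 > ⋯ > d p` (when `p ≥ 1`), and matrices
`Af i = A_{2(i+1)}` (size `n_{i+1} × n_i`) and `Ab i = A_{2i+1}` (size
`n_i × n_{i+1}`) with `B = A₁ * A₂`, the permutation identities
`A_{2i} * A_{2i-1} = A_{2i+1} * A_{2i+2}` for `i = 1, …, p-1`, and the final
chain member `B^p = A_{2p} * A_{2p-1}` (equal to `B` itself when `p = 0`)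
invertible or zero. -/
theorem stmt13
    {F : Type*} [Field F] [DecidableEq F]
    (n : ℕ) (hn : 1 ≤ n) (B : Matrix (Fin n) (Fin n) F) :
    ∃ (p : ℕ) (d : ℕ → ℕ) (h0 : d 0 = n)
      (Af : ∀ i : ℕ, Matrix (Fin (d (i + 1))) (Fin (d i)) F)
      (Ab : ∀ i : ℕ, Matrix (Fin (d i)) (Fin (d (i + 1))) F),
      (∀ i < p, d (i + 1) < d i) ∧
      (1 ≤ p → B.submatrix (Fin.cast h0) (Fin.cast h0) = Ab 0 * Af 0) ∧
      (∀ i : ℕ, i + 1 < p → Af i * Ab i = Ab (i + 1) * Af (i + 1)) ∧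
      (∀ q : ℕ, p = q + 1 → (IsUnit (Af q * Ab q) ∨ Af q * Ab q = 0)) ∧
      (p = 0 → (IsUnit B ∨ B = 0)) :=
  chain_aux n B
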